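/- arXiv:1412.3076 — 2 statements merged into one kernel-verified Lean document; each statement's English description precedes it below -/
import Mathlib

section
/- Let ∃X⃗∀Y⃗φ be a closed quantified Boolean formula. Construct the binary causal model M with exogenous variable U, endogenous variables {X⁰, X¹ : X ∈ X⃗} ∪ {Y : Y ∈ Y⃗} ∪ {A} (A fresh), where every endogenous variable V has the structural equation V = U; let u = 0 be the context assigning 0 to U; and let ψ = ψ₁ ∨ (ψ₂ ∧ ψ₃), where ψ₁ = ¬(⋀_{X∈X⃗}(X⁰ ≠ X¹)), ψ₂ = ¬(A = 1 ∧ Y⃗ = 1⃗), and ψ₃ = (A = 1) ∨ φ̄[X⃗/X⃗¹] (φ̄ replaces each propositional variable p of φ by the primitive event p = 1, and [X⃗/X⃗¹] replaces each occurrence of X ∈ X⃗ by X¹). Then ∃X⃗∀Y⃗φ is true if and only if A = 0 is a cause of ψ in (M, u) under the updated HP definition. -/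
/-! ### Causal models (finitely presented) -/

/-- A finitely presented causal model over a signature `(U, V, R)`:
`rU` lists the range sizes of the exogenous variables `U` (a variable with
range size `r` takes values in `{0, …, r-1}`), `rV` those of the endogenous
variables `V`, and `tables` presents, for each endogenous variable, the
structural equation `F_X` as a finite table.  A table `t` applied to a total
assignment `a` (a list of values, exogenous variables first) yields the value
`evalTable t a = t.getD (Encodable.encode a + 1) (t.headD 0)`. -/
structure CM : Type where
  rU : List ℕ
  rV : List ℕ
  tables : List (List ℕ)

/-- The number of exogenous variables. -/
def CM.nU (M : CM) : ℕ := M.rU.length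

/-- The number of endogenous variables. -/
def CM.nV (M : CM) : ℕ := M.rV.length

/-- The value a table assigns to a total assignment. -/
def evalTable (t : List ℕ) (a : List ℕ) : ℕ :=
  t.getD (Encodable.encode a + 1) (t.headD 0)

/-- One simultaneous application of the structural equations to the endogenous
assignment `v`, under the intervention `I` (where `I i = some c` means that
endogenous variable `i` has been set to `c`), in context `u`. -/
def CM.step (M : CM) (I : ℕ → Option ℕ) (u v : List ℕ) : List ℕ :=
  (List.range M.nV).map fun i =>
    (I i).getD (evalTable (M.tables.getD i []) (u ++ v))

/-- The solution of the equations of `M` under intervention `I` in context `u`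
(unique for recursive models), as an assignment to the endogenous
variables. -/
def CM.solve (M : CM) (I : ℕ → Option ℕ) (u : List ℕ) : List ℕ :=
  (fun v => M.step I u v)^[M.nV + 1] (List.replicate M.nV 0)

/-- The actual value of endogenous variable `i` in `(M, u)`. -/
def CM.val (M : CM) (u : List ℕ) (i : ℕ) : ℕ :=
  (M.solve (fun _ => none) u).getD i 0

/-- Boolean combinations of primitive events `X = x`, where `X` is (the index
of) an endogenous variable. -/
inductive CForm : Type
  | eq : ℕ → ℕ → CForm
  | not : CForm → CForm
  | and : CForm → CForm → CForm
  | or : CForm → CForm → CForm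

/-- Satisfaction of a formula by an assignment `v` to the endogenous
variables. -/
def CForm.sat (v : List ℕ) : CForm → Prop
  | .eq i x => v.getD i 0 = x
  | .not φ => ¬ CForm.sat v φ
  | .and φ ψ => CForm.sat v φ ∧ CForm.sat v ψ
  | .or φ ψ => CForm.sat v φ ∨ CForm.sat v ψ

/-- `(M, u⃗) ⊨ [I]φ`: `φ` holds in the solution of the equations of `M` as
modified by the intervention `I`, in context `u`. -/
def CM.holds (M : CM) (u : List ℕ) (I : ℕ → Option ℕ) (φ : CForm) : Prop :=
  CForm.sat (M.solve I u) φ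

/-- The value assigned to variable `i` by the conjunction `X⃗ = x⃗`. -/
def xOf (Xs xs : List ℕ) (i : ℕ) : ℕ := xs.getD (Xs.idxOf i) 0

/-- The intervention `X⃗ ← x⃗, W' ← w, Z' ← z⃗*`, where `z⃗*` records the
actual values of the variables in `(M, u)`. -/
def intv (M : CM) (u : List ℕ) (Xs xs : List ℕ) (W' : Finset ℕ) (w : ℕ → ℕ)
    (Z' : Finset ℕ) : ℕ → Option ℕ := fun i =>
  if i ∈ Xs then some (xOf Xs xs i)
  else if i ∈ W' then some (w i)
  else if i ∈ Z' then some (M.val u i)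
  else none

/-- The set of endogenous variables of `M`. -/
def CM.endo (M : CM) : Finset ℕ := Finset.range M.nV

/-- AC1: `X⃗ = x⃗` and `φ` both hold in `(M, u⃗)`. -/
def AC1 (M : CM) (u : List ℕ) (φ : CForm) (Xs xs : List ℕ) : Prop :=
  (∀ k, k < Xs.length → M.val u (Xs.getD k 0) = xs.getD k 0) ∧
  M.holds u (fun _ => none) φ

/-- AC2 of the updated HP definition, with a specific witness `(W⃗, x⃗', w⃗)`.
Here `W` is a set of endogenous variables disjoint from `X⃗` (so that
`(Z⃗, W⃗)` with `Z⃗` the complement of `W⃗` is a partition of `V` with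
`X⃗ ⊆ Z⃗`), `x'` is a setting of `X⃗` and `w` a setting of `W⃗` (settings take
values in the ranges of the respective variables), such that:
(a) `(M, u⃗) ⊨ [X⃗ ← x⃗', W⃗ ← w⃗]¬φ`; and
(b) `(M, u⃗) ⊨ [X⃗ ← x⃗, W⃗' ← w⃗, Z⃗' ← z⃗*]φ` for all subsets `W⃗'` of `W⃗`
    and all subsets `Z⃗'` of `Z⃗ \ X⃗`, where `z⃗*` gives the actual values in
    `(M, u⃗)`. -/
def AC2With (M : CM) (u : List ℕ) (φ : CForm) (Xs xs : List ℕ)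
    (W : Finset ℕ) (x' : List ℕ) (w : ℕ → ℕ) : Prop :=
  W ⊆ M.endo ∧ (∀ i ∈ Xs, i ∉ W) ∧
  x'.length = Xs.length ∧
  (∀ k, k < Xs.length → x'.getD k 0 < M.rV.getD (Xs.getD k 0) 0) ∧
  (∀ i ∈ W, w i < M.rV.getD i 0) ∧
  ¬ M.holds u (intv M u Xs x' W w ∅) φ ∧
  (∀ W' ⊆ W, ∀ Z' ⊆ (M.endo \ W) \ Xs.toFinset,
    M.holds u (intv M u Xs xs W' w Z') φ)

/-- AC2 of the updated HP definition. -/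
def AC2 (M : CM) (u : List ℕ) (φ : CForm) (Xs xs : List ℕ) : Prop :=
  ∃ W x' w, AC2With M u φ Xs xs W x' w

/-- AC3: minimality — no strict sub-conjunction of `X⃗ = x⃗` satisfies AC2. -/
def AC3 (M : CM) (u : List ℕ) (φ : CForm) (Xs xs : List ℕ) : Prop :=
  ∀ Ys ys : List ℕ, Ys.length = ys.length →
    List.Sublist (Ys.zip ys) (Xs.zip xs) → Ys.zip ys ≠ Xs.zip xs → ¬ AC2 M u φ Ys ys

/-- `X⃗ = x⃗` is an actual cause of `φ` in `(M, u⃗)` (updated HP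
definition). -/
def IsCause (M : CM) (u : List ℕ) (φ : CForm) (Xs xs : List ℕ) : Prop :=
  AC1 M u φ Xs xs ∧ AC2 M u φ Xs xs ∧ AC3 M u φ Xs xs

/-- A total assignment (to all variables, exogenous first) respecting the
variable ranges. -/
def CM.ValidAssign (M : CM) (a : List ℕ) : Prop :=
  a.length = M.nU + M.nV ∧
  ∀ k, k < a.length → a.getD k 0 < (M.rU ++ M.rV).getD k 0

/-- Well-formedness of the presentation: one table per endogenous variable,
nonempty ranges, and all equations produce values in range. -/
def CM.WellFormed (M : CM) : Prop :=
  M.tables.length = M.nV ∧ (∀ r ∈ M.rU, 1 ≤ r) ∧ (∀ r ∈ M.rV, 1 ≤ r) ∧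
  ∀ i, i < M.nV → ∀ a, M.ValidAssign a →
    evalTable (M.tables.getD i []) a < M.rV.getD i 0

/-- The structural equation of endogenous variable `i` depends on position `k`
of the total assignment. -/
def CM.DependsOn (M : CM) (i k : ℕ) : Prop :=
  ∃ a b, M.ValidAssign a ∧ M.ValidAssign b ∧
    (∀ m, m ≠ k → a.getD m 0 = b.getD m 0) ∧
    evalTable (M.tables.getD i []) a ≠ evalTable (M.tables.getD i []) b

/-- `M` is recursive: the dependency graph of the causal network is acyclic,
i.e., the endogenous variables can be linearly ordered so that each equation
depends only on earlier variables (and the exogenous variables). -/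
def CM.Recursive (M : CM) : Prop :=
  ∃ ord : List ℕ, ord.Nodup ∧ (∀ j, j < M.nV → j ∈ ord) ∧
    ∀ i j, i < M.nV → j < M.nV → M.DependsOn i (M.nU + j) →
      ord.idxOf j < ord.idxOf i

/-- A binary causal model: every variable has exactly two possible values. -/
def CM.Binary (M : CM) : Prop := (∀ r ∈ M.rU, r = 2) ∧ (∀ r ∈ M.rV, r = 2)

/-- A context: a setting of the exogenous variables, within their ranges. -/
def CM.ValidContext (M : CM) (u : List ℕ) : Prop :=
  u.length = M.nU ∧ ∀ k, k < u.length → u.getD k 0 < M.rU.getD k 0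

/-! ### Explicit construction of tables -/

/-- All 0/1-valued lists of length `n`. -/
def binLists : ℕ → List (List ℕ)
  | 0 => [[]]
  | (n+1) => (binLists n).flatMap fun l => [0 :: l, 1 :: l]

/-- A finite table presenting the function `f` on all 0/1 assignments of
length `n`: `evalTable (mkTable n f) a = f a` for every `a ∈ binLists n`. -/
def mkTable (n : ℕ) (f : List ℕ → ℕ) : List ℕ :=
  let dom := binLists n
  let m := ((dom.map fun a => Encodable.encode a + 1).foldr max 0) + 1
  (List.range m).map fun idx =>
    match dom.find? (fun a => Encodable.encode a + 1 == idx) with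
    | some a => f a
    | none => 0

/-! ### Propositional formulas and quantified Boolean formulas -/

/-- Propositional formulas over variables indexed by `ℕ`. -/
inductive PropForm : Type
  | var : ℕ → PropForm
  | not : PropForm → PropForm
  | and : PropForm → PropForm → PropForm
  | or : PropForm → PropForm → PropForm

/-- Evaluation of a propositional formula under a truth assignment. -/
def PropForm.eval (τ : ℕ → Bool) : PropForm → Bool
  | .var v => τ v
  | .not p => !(PropForm.eval τ p)
  | .and p q => (PropForm.eval τ p) && (PropForm.eval τ q)
  | .or p q => (PropForm.eval τ p) || (PropForm.eval τ q)

/-- The variables occurring in a propositional formula. -/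
def PropForm.vars : PropForm → List ℕ
  | .var v => [v]
  | .not p => p.vars
  | .and p q => p.vars ++ q.vars
  | .or p q => p.vars ++ q.vars

/-- A valid causal formula (used as the unit of conjunctions). -/
def CForm.top : CForm := .or (.eq 0 0) (.not (.eq 0 0))

/-- The conjunction of a list of causal formulas. -/
def conjC (l : List CForm) : CForm := l.foldr CForm.and CForm.top

/-- The causal formula `X ≠ Y` for binary variables `i`, `j`, i.e.
`(X = 1 ∧ Y = 0) ∨ (X = 0 ∧ Y = 1)`. -/
def neqC (i j : ℕ) : CForm :=
  .or (.and (.eq i 1) (.eq j 0)) (.and (.eq i 0) (.eq j 1))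

/-! ### The reduction from `Σ₂(SAT)` to singleton causality in binary models

Given a CQBF `∃X⃗∀Y⃗φ` (with `X⃗`, `Y⃗` given by the lists `Xv`, `Yv` of
variable names), the constructed binary causal model has one exogenous
variable `U` and endogenous variables `X⁰` (indices `0, …, nX-1`), `X¹`
(indices `nX, …, 2nX-1`) for each `X ∈ X⃗`, `Y` (indices `2nX, …, 2nX+nY-1`)
for each `Y ∈ Y⃗`, and a fresh variable `A` (index `2nX+nY`), where every
endogenous variable `V` has structural equation `V = U`. -/

/-- The constructed model. -/
def redModel (Xv Yv : List ℕ) : CM :=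
  ⟨[2], List.replicate (2 * Xv.length + Yv.length + 1) 2,
    List.replicate (2 * Xv.length + Yv.length + 1)
      (mkTable (2 * Xv.length + Yv.length + 2) fun a => a.getD 0 0)⟩

/-- `φ̄[X⃗/X⃗¹]`: replace each propositional variable `p` by the primitive
event `p = 1`, and each `X ∈ X⃗` by `X¹`. -/
def trX1 (Xv Yv : List ℕ) : PropForm → CForm
  | .var v => if v ∈ Xv then .eq (Xv.length + Xv.idxOf v) 1
              else .eq (2 * Xv.length + Yv.idxOf v) 1
  | .not p => .not (trX1 Xv Yv p)
  | .and p q => .and (trX1 Xv Yv p) (trX1 Xv Yv q)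
  | .or p q => .or (trX1 Xv Yv p) (trX1 Xv Yv q)

/-- The formula `ψ = ψ₁ ∨ (ψ₂ ∧ ψ₃)`, where
`ψ₁ = ¬(⋀_{X ∈ X⃗} (X⁰ ≠ X¹))`, `ψ₂ = ¬(A = 1 ∧ Y⃗ = 1⃗)` and
`ψ₃ = (A = 1) ∨ φ̄[X⃗/X⃗¹]`. -/
def redForm (Xv Yv : List ℕ) (φ : PropForm) : CForm :=
  let nX := Xv.length
  let nY := Yv.length
  let ψ1 : CForm :=
    .not (conjC ((List.range nX).map fun j => neqC j (nX + j)))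
  let ψ2 : CForm :=
    .not (.and (.eq (2 * nX + nY) 1)
      (conjC ((List.range nY).map fun j => .eq (2 * nX + j) 1)))
  let ψ3 : CForm := .or (.eq (2 * nX + nY) 1) (trX1 Xv Yv φ)
  .or ψ1 (.and ψ2 ψ3)

namespace Red

lemma le_foldr_max {l : List ℕ} {x : ℕ} (h : x ∈ l) : x ≤ l.foldr max 0 := by
  induction l with
  | nil => simp at h
  | cons c l ih =>
    rcases List.mem_cons.1 h with rfl | h'
    · exact le_max_left _ _
    · exact le_trans (ih h') (le_max_right _ _)

lemma find?_encode {a : List ℕ} : ∀ {l : List (List ℕ)}, a ∈ l →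
    l.find? (fun b => Encodable.encode b + 1 == Encodable.encode a + 1) = some a := by
  intro l h
  induction l with
  | nil => simp at h
  | cons c l ih =>
    rcases List.mem_cons.1 h with rfl | h'
    · exact List.find?_cons_of_pos (by simp)
    · by_cases hc : ((fun b => Encodable.encode b + 1 == Encodable.encode a + 1) c) = true
      · have : c = a := Encodable.encode_injective (by simpa using hc)
        subst this
        exact List.find?_cons_of_pos (by simp)
      · exact (List.find?_cons_of_neg (p := fun b => Encodable.encode b + 1 == Encodable.encode a + 1) hc).trans (ih h')

lemma mem_binLists {n : ℕ} {a : List ℕ} :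
    a ∈ binLists n ↔ a.length = n ∧ ∀ x ∈ a, x < 2 := by
  induction n generalizing a with
  | zero =>
    simp [binLists, List.length_eq_zero_iff]
    rintro rfl; simp
  | succ n ih =>
    simp only [binLists, List.mem_flatMap]
    constructor
    · rintro ⟨l, hl, h⟩
      obtain ⟨h1, h2⟩ := ih.1 hl
      simp only [List.mem_cons, List.mem_singleton, List.not_mem_nil, or_false] at h
      rcases h with rfl | rfl <;>
        refine ⟨by simp [h1], ?_⟩ <;> intro x hx <;>
        rcases List.mem_cons.1 hx with rfl | hx <;> first | omega | exact h2 x hx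
    · rintro ⟨h1, h2⟩
      cases a with
      | nil => simp at h1
      | cons x t =>
        refine ⟨t, ih.2 ⟨by simpa using h1, fun y hy => h2 y (List.mem_cons_of_mem _ hy)⟩, ?_⟩
        have hx : x < 2 := h2 x (List.mem_cons_self)
        interval_cases x <;> simp

lemma getD_range_map (g : ℕ → ℕ) {m k : ℕ} (h : k < m) (d : ℕ) :
    ((List.range m).map g).getD k d = g k := by
  rw [List.getD_eq_getElem?_getD, List.getElem?_map, List.getElem?_range h]
  rfl

lemma mkTable_def (n : ℕ) (f : List ℕ → ℕ) :
    mkTable n f =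
      (List.range (((binLists n).map fun a => Encodable.encode a + 1).foldr max 0 + 1)).map
        (fun idx => match (binLists n).find? (fun a => Encodable.encode a + 1 == idx) with
          | some a => f a
          | none => 0) := rfl

lemma evalTable_mkTable {n : ℕ} (f : List ℕ → ℕ) {a : List ℕ} (h : a ∈ binLists n) :
    evalTable (mkTable n f) a = f a := by
  have hle : Encodable.encode a + 1 ≤
      ((binLists n).map fun b => Encodable.encode b + 1).foldr max 0 :=
    le_foldr_max (List.mem_map_of_mem h)
  rw [evalTable, mkTable_def, getD_range_map _ (by omega), find?_encode h]

end Red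

namespace Red

def NN (Xv Yv : List ℕ) : ℕ := 2 * Xv.length + Yv.length + 1

variable (Xv Yv : List ℕ)

lemma redModel_nV : (redModel Xv Yv).nV = NN Xv Yv := by
  simp [redModel, CM.nV, NN]

lemma redModel_rV {i : ℕ} (h : i < NN Xv Yv) : (redModel Xv Yv).rV.getD i 0 = 2 := by
  rw [redModel, List.getD_eq_getElem?_getD, List.getElem?_replicate]
  rw [NN] at h
  simp [h]

lemma redModel_tables {i : ℕ} (h : i < NN Xv Yv) :
    (redModel Xv Yv).tables.getD i [] =
      mkTable (NN Xv Yv + 1) (fun a => a.getD 0 0) := by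
  rw [redModel, List.getD_eq_getElem?_getD, List.getElem?_replicate]
  rw [NN] at h ⊢
  have : 2 * Xv.length + Yv.length + 2 = 2 * Xv.length + Yv.length + 1 + 1 := by omega
  simp [h, this]

def goodI (I : ℕ → Option ℕ) : Prop := ∀ i c, I i = some c → c < 2

lemma step_eq {I : ℕ → Option ℕ} {v : List ℕ}
    (hlen : v.length = NN Xv Yv) (hv : ∀ x ∈ v, x < 2) :
    (redModel Xv Yv).step I [0] v =
      (List.range (NN Xv Yv)).map fun i => (I i).getD 0 := by
  rw [CM.step, redModel_nV]
  apply List.map_congr_left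
  intro i hi
  rw [List.mem_range] at hi
  rw [redModel_tables _ _ hi]
  have hmem : ([0] ++ v) ∈ binLists (NN Xv Yv + 1) := by
    rw [mem_binLists]
    constructor
    · simp [hlen]
    · intro x hx
      rcases List.mem_append.1 hx with hx | hx
      · simp at hx; omega
      · exact hv x hx
  rw [evalTable_mkTable _ hmem]
  simp

lemma solve_eq {I : ℕ → Option ℕ} (hI : goodI I) :
    (redModel Xv Yv).solve I [0] =
      (List.range (NN Xv Yv)).map fun i => (I i).getD 0 := by
  have hgood : ∀ x ∈ (List.range (NN Xv Yv)).map (fun i => (I i).getD 0), x < 2 := by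
    intro x hx
    simp only [List.mem_map] at hx
    obtain ⟨i, _, rfl⟩ := hx
    cases h : I i with
    | none => simp
    | some c => simp [hI i c h]
  have hfix : (redModel Xv Yv).step I [0]
        ((List.range (NN Xv Yv)).map fun i => (I i).getD 0)
      = (List.range (NN Xv Yv)).map fun i => (I i).getD 0 :=
    step_eq Xv Yv (by simp) hgood
  rw [CM.solve, redModel_nV, Function.iterate_succ_apply]
  rw [step_eq Xv Yv (by simp) (fun x hx => by simp [List.eq_of_mem_replicate hx])]
  exact Function.iterate_fixed hfix _

def gI (Xv Yv : List ℕ) (I : ℕ → Option ℕ) : ℕ → ℕ :=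
  fun i => if i < NN Xv Yv then (I i).getD 0 else 0

lemma getD_solve {I : ℕ → Option ℕ} (hI : goodI I) (i : ℕ) :
    ((redModel Xv Yv).solve I [0]).getD i 0 = gI Xv Yv I i := by
  rw [solve_eq Xv Yv hI, gI]
  by_cases h : i < NN Xv Yv
  · rw [getD_range_map _ h]
    simp [h]
  · rw [List.getD_eq_getElem?_getD, List.getElem?_eq_none (by simp; omega)]
    simp [h]

def satF (g : ℕ → ℕ) : CForm → Prop
  | .eq i x => g i = x
  | .not ψ => ¬ satF g ψ
  | .and ψ χ => satF g ψ ∧ satF g χ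
  | .or ψ χ => satF g ψ ∨ satF g χ

lemma sat_iff_satF (v : List ℕ) (ψ : CForm) :
    CForm.sat v ψ ↔ satF (fun i => v.getD i 0) ψ := by
  induction ψ <;> simp [CForm.sat, satF, *]

lemma holds_iff {I : ℕ → Option ℕ} (hI : goodI I) (ψ : CForm) :
    (redModel Xv Yv).holds [0] I ψ ↔ satF (gI Xv Yv I) ψ := by
  rw [CM.holds, sat_iff_satF]
  have : (fun i => ((redModel Xv Yv).solve I [0]).getD i 0) = gI Xv Yv I :=
    funext (getD_solve Xv Yv hI)
  rw [this]

lemma val_eq (i : ℕ) : (redModel Xv Yv).val [0] i = 0 := by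
  rw [CM.val, getD_solve Xv Yv (fun i c h => by simp at h)]
  rw [gI]
  split <;> rfl

lemma gI_intv (Xs xs : List ℕ) (W' : Finset ℕ) (w : ℕ → ℕ) (Z' : Finset ℕ) (i : ℕ) :
    gI Xv Yv (intv (redModel Xv Yv) [0] Xs xs W' w Z') i =
      if i < NN Xv Yv then
        (if i ∈ Xs then xOf Xs xs i else if i ∈ W' then w i else 0)
      else 0 := by
  rw [gI, intv]
  by_cases h1 : i < NN Xv Yv
  · simp only [h1, if_true]
    split_ifs <;> simp [val_eq]
  · simp only [h1, if_false]

lemma goodI_intv {Xs xs : List ℕ} {W' : Finset ℕ} {w : ℕ → ℕ} {Z' : Finset ℕ}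
    (hx : ∀ i ∈ Xs, xOf Xs xs i < 2) (hw : ∀ i ∈ W', w i < 2) :
    goodI (intv (redModel Xv Yv) [0] Xs xs W' w Z') := by
  intro i c h
  rw [intv] at h
  split_ifs at h with h1 h2 h3
  all_goals first
    | (cases h; exact hx i h1)
    | (cases h; exact hw i h2)
    | (cases h; rw [val_eq]; omega)
    | cases h

lemma satF_top (g : ℕ → ℕ) : satF g CForm.top := by
  rw [CForm.top]
  exact em _

lemma satF_conjC (g : ℕ → ℕ) (l : List CForm) :
    satF g (conjC l) ↔ ∀ c ∈ l, satF g c := by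
  induction l with
  | nil => simp [conjC, satF_top g]
  | cons c l ih =>
    rw [conjC] at ih ⊢
    simp [List.foldr_cons, satF, ih]

def posOf (Xv Yv : List ℕ) (v : ℕ) : ℕ :=
  if v ∈ Xv then Xv.length + Xv.idxOf v else 2 * Xv.length + Yv.idxOf v

lemma satF_trX1 (g : ℕ → ℕ) (ψ : PropForm) :
    satF g (trX1 Xv Yv ψ) ↔
      PropForm.eval (fun v => decide (g (posOf Xv Yv v) = 1)) ψ = true := by
  induction ψ with
  | var v => by_cases h : v ∈ Xv <;> simp [trX1, satF, PropForm.eval, posOf, h]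
  | not p ih => simp [trX1, satF, PropForm.eval, ih]
  | and p q ih1 ih2 => simp [trX1, satF, PropForm.eval, ih1, ih2]
  | or p q ih1 ih2 => simp [trX1, satF, PropForm.eval, ih1, ih2]

lemma eval_congr {τ τ' : ℕ → Bool} : ∀ {ψ : PropForm}, (∀ v ∈ ψ.vars, τ v = τ' v) →
    PropForm.eval τ ψ = PropForm.eval τ' ψ := by
  intro ψ h
  induction ψ with
  | var v => exact h v (by simp [PropForm.vars])
  | not p ih => simp only [PropForm.eval]; rw [ih (fun v hv => h v (by simp [PropForm.vars, hv]))]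
  | and p q ih1 ih2 =>
    simp only [PropForm.eval]
    rw [ih1 (fun v hv => h v (by simp [PropForm.vars, hv])),
      ih2 (fun v hv => h v (by simp [PropForm.vars, hv]))]
  | or p q ih1 ih2 =>
    simp only [PropForm.eval]
    rw [ih1 (fun v hv => h v (by simp [PropForm.vars, hv])),
      ih2 (fun v hv => h v (by simp [PropForm.vars, hv]))]

lemma getD_indexOf {l : List ℕ} {v : ℕ} (h : v ∈ l) :
    l.getD (List.idxOf v l) 0 = v := by
  rw [List.getD_eq_getElem?_getD,
    List.getElem?_eq_getElem (List.idxOf_lt_length_iff.2 h)]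
  simp [List.getElem_idxOf]

lemma redForm_iff (φ : PropForm) (g : ℕ → ℕ) :
    satF g (redForm Xv Yv φ) ↔
      ((¬ ∀ j < Xv.length, satF g (neqC j (Xv.length + j))) ∨
        ((¬ (g (2 * Xv.length + Yv.length) = 1 ∧
            ∀ j < Yv.length, g (2 * Xv.length + j) = 1)) ∧
          (g (2 * Xv.length + Yv.length) = 1 ∨ satF g (trX1 Xv Yv φ)))) := by
  rw [redForm]
  simp only [satF, satF_conjC, List.mem_map, List.mem_range]
  constructor
  · rintro (h | ⟨h2, h3⟩)
    · left; intro hall; exact h (fun c ⟨j, hj, hc⟩ => hc ▸ hall j hj)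
    · right
      refine ⟨fun ⟨ha, hy⟩ => h2 ⟨ha, fun c ⟨j, hj, hc⟩ => hc ▸ hy j hj⟩, h3⟩
  · rintro (h | ⟨h2, h3⟩)
    · left; intro hall; exact h (fun j hj => hall _ ⟨j, hj, rfl⟩)
    · right
      refine ⟨fun ⟨ha, hy⟩ => h2 ⟨ha, fun j hj => hy _ ⟨j, hj, rfl⟩⟩, h3⟩

lemma satF_neqC (g : ℕ → ℕ) (i j : ℕ) :
    satF g (neqC i j) ↔ (g i = 1 ∧ g j = 0) ∨ (g i = 0 ∧ g j = 1) := by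
  simp [neqC, satF]

end Red

namespace Red

lemma xOf_single (a : ℕ) (xs : List ℕ) : xOf [a] xs a = xs.getD 0 0 := by
  simp [xOf]

lemma getD_single (c : ℕ) : ([c] : List ℕ).getD 0 0 = c := rfl

lemma mem_single_iff {a i : ℕ} : i ∈ ([a] : List ℕ) ↔ i = a := List.mem_singleton

end Red


open Red

/-- **Correctness of the reduction (Theorem 1, hardness part).**  The CQBF
`∃X⃗∀Y⃗φ` is true iff `A = 0` is a cause of `ψ` in `(M, u)`, where `M` is
the constructed binary model, `u = 0` is the context assigning `0` to `U`,
and `ψ` is the constructed formula. -/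
theorem sigma2SAT_reduction (φ : PropForm) (Xv Yv : List ℕ)
    (hX : Xv.Nodup) (hY : Yv.Nodup) (hdisj : ∀ v ∈ Xv, v ∉ Yv)
    (hvars : ∀ v ∈ φ.vars, v ∈ Xv ∨ v ∈ Yv) :
    (∃ τ : ℕ → Bool, ∀ ν : ℕ → Bool,
        φ.eval (fun v => if v ∈ Xv then τ v else ν v) = true) ↔
      IsCause (redModel Xv Yv) [0] (redForm Xv Yv φ)
        [2 * Xv.length + Yv.length] [0] := by
  classical
  have hAA : 2 * Xv.length + Yv.length < NN Xv Yv := by rw [NN]; omega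
  have hgnone : goodI (fun _ => none) := fun i c h => by simp at h
  constructor
  · -- forward
    rintro ⟨τ, hτ⟩
    set w : ℕ → ℕ := fun i =>
      if i < Xv.length then (if τ (Xv.getD i 0) then 0 else 1)
      else if i < 2 * Xv.length then (if τ (Xv.getD (i - Xv.length) 0) then 1 else 0)
      else 1 with hwdef
    refine ⟨⟨?_, ?_⟩, ⟨Finset.range (2 * Xv.length + Yv.length), [1], w,
      ?_, ?_, rfl, ?_, ?_, ?_, ?_⟩, ?_⟩
    · -- AC1 actual values
      intro k hk
      simp only [List.length_singleton] at hk
      interval_cases k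
      simp [val_eq]
    ·
      rw [holds_iff Xv Yv hgnone, redForm_iff]
      have hg0 : gI Xv Yv (fun _ => none) = fun _ => 0 := by
        funext i; rw [gI]; split <;> rfl
      rw [hg0]
      by_cases hx0 : Xv.length = 0
      · right
        refine ⟨by rintro ⟨ha, -⟩; exact one_ne_zero ha.symm, Or.inr ?_⟩
        rw [satF_trX1]
        have hXv : Xv = [] := List.length_eq_zero_iff.mp hx0
        subst hXv
        have h1 := hτ (fun _ => false)
        have h2 : PropForm.eval (fun v => decide ((fun _ => (0:ℕ)) (posOf [] Yv v) = 1)) φ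
            = PropForm.eval (fun v => if v ∈ ([] : List ℕ) then τ v else false) φ :=
          eval_congr (fun v hv => by simp)
        rw [h2, h1]
      · left
        intro hall
        have := hall 0 (by omega)
        rw [satF_neqC] at this
        simp at this
    · -- W ⊆ endo
      rw [CM.endo, redModel_nV, NN]
      exact Finset.range_subset_range.2 (by omega)
    · -- A ∉ W
      intro i hi
      rw [mem_single_iff] at hi
      subst hi
      simp
    · -- x' in range
      intro k hk
      simp only [List.length_singleton] at hk
      interval_cases k
      rw [getD_single, getD_single, redModel_rV Xv Yv hAA]
      omega
    · -- w in range
      intro i hi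
      have hiN : i < NN Xv Yv := by
        rw [Finset.mem_range] at hi; rw [NN]; omega
      rw [redModel_rV Xv Yv hiN, hwdef]
      dsimp only
      split_ifs <;> omega
    · -- (a)
      have hgood : goodI (intv (redModel Xv Yv) [0]
          [2 * Xv.length + Yv.length] [1] (Finset.range (2 * Xv.length + Yv.length)) w ∅) := by
        apply goodI_intv
        · intro i hi; rw [mem_single_iff] at hi; subst hi
          rw [xOf_single, getD_single]; omega
        · intro i hi; rw [hwdef]; dsimp only; split_ifs <;> omega
      rw [holds_iff Xv Yv hgood, redForm_iff]
      have hg := gI_intv Xv Yv [2 * Xv.length + Yv.length] [1]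
        (Finset.range (2 * Xv.length + Yv.length)) w ∅
      rintro (h | ⟨h2, -⟩)
      · apply h
        intro j hj
        rw [satF_neqC]
        have hj0 : gI Xv Yv (intv (redModel Xv Yv) [0] [2 * Xv.length + Yv.length] [1] (Finset.range (2 * Xv.length + Yv.length)) w ∅) j = (if τ (Xv.getD j 0) then 0 else 1) := by
          rw [hg j, if_pos (by rw [NN]; omega), if_neg (by rw [mem_single_iff]; omega),
            if_pos (by rw [Finset.mem_range]; omega), hwdef]
          dsimp only
          rw [if_pos hj]
        have hj1 : gI Xv Yv (intv (redModel Xv Yv) [0] [2 * Xv.length + Yv.length] [1] (Finset.range (2 * Xv.length + Yv.length)) w ∅) (Xv.length + j) = (if τ (Xv.getD j 0) then 1 else 0) := by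
          rw [hg (Xv.length + j), if_pos (by rw [NN]; omega),
            if_neg (by rw [mem_single_iff]; omega),
            if_pos (by rw [Finset.mem_range]; omega), hwdef]
          dsimp only
          rw [if_neg (by omega), if_pos (by omega)]
          have he' : Xv.length + j - Xv.length = j := by omega
          rw [he']
        rw [hj0, hj1]
        cases hτj : τ (Xv.getD j 0) <;> simp [hτj]
      · apply h2
        constructor
        · rw [hg _, if_pos hAA, if_pos (mem_single_iff.2 rfl), xOf_single, getD_single]
        · intro j hj
          rw [hg _, if_pos (by rw [NN]; omega), if_neg (by rw [mem_single_iff]; omega),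
            if_pos (by rw [Finset.mem_range]; omega), hwdef]
          dsimp only
          rw [if_neg (by omega), if_neg (by omega)]
    · -- (b)
      intro W' hW' Z' hZ'
      have hgood : goodI (intv (redModel Xv Yv) [0]
          [2 * Xv.length + Yv.length] [0] W' w Z') := by
        apply goodI_intv
        · intro i hi; rw [mem_single_iff] at hi; subst hi
          rw [xOf_single, getD_single]; omega
        · intro i hi; rw [hwdef]; dsimp only; split_ifs <;> omega
      rw [holds_iff Xv Yv hgood, redForm_iff]
      have hg := gI_intv Xv Yv [2 * Xv.length + Yv.length] [0] W' w Z'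
      by_cases hall : ∀ j < Xv.length,
          satF (gI Xv Yv (intv (redModel Xv Yv) [0] [2 * Xv.length + Yv.length] [0] W' w Z'))
            (neqC j (Xv.length + j))
      · right
        have hgA : gI Xv Yv (intv (redModel Xv Yv) [0] [2 * Xv.length + Yv.length] [0] W' w Z')
            (2 * Xv.length + Yv.length) = 0 := by
          rw [hg _, if_pos hAA, if_pos (mem_single_iff.2 rfl), xOf_single, getD_single]
        refine ⟨by rintro ⟨ha, -⟩; rw [hgA] at ha; exact one_ne_zero ha.symm, Or.inr ?_⟩
        rw [satF_trX1]
        refine Eq.trans (eval_congr ?_)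
          (hτ (fun v => decide (gI Xv Yv (intv (redModel Xv Yv) [0]
            [2 * Xv.length + Yv.length] [0] W' w Z') (2 * Xv.length + List.idxOf v Yv) = 1)))
        intro v hv
        by_cases hvX : v ∈ Xv
        · have hidx : List.idxOf v Xv < Xv.length := List.idxOf_lt_length_iff.2 hvX
          have hXvv : Xv.getD (List.idxOf v Xv) 0 = v := getD_indexOf hvX
          simp only [posOf, hvX, if_pos, if_true]
          have hpair := hall (List.idxOf v Xv) hidx
          rw [satF_neqC] at hpair
          have hval : gI Xv Yv (intv (redModel Xv Yv) [0] [2 * Xv.length + Yv.length] [0] W' w Z')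
              (Xv.length + List.idxOf v Xv)
              = (if (Xv.length + List.idxOf v Xv) ∈ W' then w (Xv.length + List.idxOf v Xv)
                  else 0) := by
            rw [hg _, if_pos (by rw [NN]; omega), if_neg (by rw [mem_single_iff]; omega)]
          have hval0 : gI Xv Yv (intv (redModel Xv Yv) [0] [2 * Xv.length + Yv.length] [0] W' w Z')
              (List.idxOf v Xv)
              = (if (List.idxOf v Xv) ∈ W' then w (List.idxOf v Xv) else 0) := by
            rw [hg _, if_pos (by rw [NN]; omega), if_neg (by rw [mem_single_iff]; omega)]
          have hw1 : w (Xv.length + List.idxOf v Xv) = (if τ v then 1 else 0) := by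
            rw [hwdef]; dsimp only
            rw [if_neg (by omega), if_pos (by omega)]
            have he' : Xv.length + List.idxOf v Xv - Xv.length = List.idxOf v Xv :=
              by omega
            rw [he', hXvv]
          have hw0 : w (List.idxOf v Xv) = (if τ v then 0 else 1) := by
            rw [hwdef]; dsimp only
            rw [if_pos hidx, hXvv]
          cases hτv : τ v
          · -- τ v = false : X¹ value is 0
            have : gI Xv Yv (intv (redModel Xv Yv) [0] [2 * Xv.length + Yv.length] [0] W' w Z')
                (Xv.length + List.idxOf v Xv) = 0 := by
              rw [hval, hw1, hτv]
              split <;> rfl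
            simp [this]
          · -- τ v = true : X⁰ value is 0, pair differs ⇒ X¹ = 1
            have hX0 : gI Xv Yv (intv (redModel Xv Yv) [0] [2 * Xv.length + Yv.length] [0] W' w Z')
                (List.idxOf v Xv) = 0 := by
              rw [hval0, hw0, hτv]
              split <;> rfl
            rcases hpair with ⟨h1', -⟩ | ⟨-, h1'⟩
            · rw [hX0] at h1'; exact absurd h1'.symm one_ne_zero
            · simp [h1']
        · simp only [posOf, hvX, if_neg, if_false]
      · left
        exact hall
    · -- AC3
      intro Ys ys hlen hsub hne
      have hzip : ([2 * Xv.length + Yv.length].zip [0] : List (ℕ × ℕ))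
          = [(2 * Xv.length + Yv.length, 0)] := rfl
      rw [hzip] at hsub hne
      rw [List.sublist_singleton] at hsub
      rcases hsub with hz | hz
      · have hmin : min Ys.length ys.length = 0 := by
          rw [← List.length_zip, hz]; rfl
        have hYs : Ys = [] := List.length_eq_zero_iff.mp (by omega)
        have hys : ys = [] := List.length_eq_zero_iff.mp (by omega)
        subst hYs; subst hys
        rintro ⟨W, x', w', -, -, -, -, -, h6, h7⟩
        apply h6
        have he : intv (redModel Xv Yv) [0] [] x' W w' ∅
            = intv (redModel Xv Yv) [0] [] ([] : List ℕ) W w' ∅ := by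
          funext i
          rw [intv, intv]
          simp
        rw [he]
        exact h7 W Finset.Subset.rfl ∅ (Finset.empty_subset _)
      · exact absurd hz hne
  · -- converse
    rintro ⟨-, ⟨W, x', w, h1, h2, h3, h4, h5, h6, h7⟩, -⟩
    have hWlt : ∀ i ∈ W, i < NN Xv Yv := by
      intro i hi
      have := h1 hi
      rw [CM.endo, redModel_nV] at this
      exact Finset.mem_range.1 this
    have hw2 : ∀ i ∈ W, w i < 2 := by
      intro i hi
      have := h5 i hi
      rwa [redModel_rV Xv Yv (hWlt i hi)] at this
    have hx2 : x'.getD 0 0 < 2 := by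
      have := h4 0 (by simp)
      rwa [getD_single, redModel_rV Xv Yv hAA] at this
    have hgood : goodI (intv (redModel Xv Yv) [0]
        [2 * Xv.length + Yv.length] x' W w ∅) := by
      apply goodI_intv
      · intro i hi; rw [mem_single_iff] at hi; subst hi
        rwa [xOf_single]
      · exact hw2
    rw [holds_iff Xv Yv hgood, redForm_iff] at h6
    set s := gI Xv Yv (intv (redModel Xv Yv) [0] [2 * Xv.length + Yv.length] x' W w ∅)
      with hsdef
    have hg := gI_intv Xv Yv [2 * Xv.length + Yv.length] x' W w ∅
    have hsA : s (2 * Xv.length + Yv.length) = x'.getD 0 0 := by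
      rw [hsdef, hg _, if_pos hAA, if_pos (mem_single_iff.2 rfl), xOf_single]
    have hneq : ∀ j < Xv.length, satF s (neqC j (Xv.length + j)) := by
      by_contra hP
      exact h6 (Or.inl hP)
    by_cases hA1 : s (2 * Xv.length + Yv.length) = 1
    · by_cases hY1 : ∀ j < Yv.length, s (2 * Xv.length + j) = 1
      · -- the interesting case
        refine ⟨fun v => decide (s (Xv.length + List.idxOf v Xv) = 1), fun ν => ?_⟩
        set W' := W.filter
          (fun i => i < 2 * Xv.length ∨ ν (Yv.getD (i - 2 * Xv.length) 0) = true) with hW'def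
        have hgood' : goodI (intv (redModel Xv Yv) [0]
            [2 * Xv.length + Yv.length] [0] W' w ∅) := by
          apply goodI_intv
          · intro i hi; rw [mem_single_iff] at hi; subst hi
            rw [xOf_single, getD_single]; omega
          · intro i hi; exact hw2 i (Finset.filter_subset _ _ hi)
        have hkey := h7 W' (Finset.filter_subset _ _) ∅ (Finset.empty_subset _)
        rw [holds_iff Xv Yv hgood', redForm_iff] at hkey
        set g' := gI Xv Yv (intv (redModel Xv Yv) [0] [2 * Xv.length + Yv.length] [0] W' w ∅)
          with hg'def
        have hg' := gI_intv Xv Yv [2 * Xv.length + Yv.length] [0] W' w ∅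
        have hXlt : ∀ i, i < 2 * Xv.length → g' i = s i := by
          intro i hi
          have hmem : i ∈ W' ↔ i ∈ W := by
            rw [hW'def, Finset.mem_filter]
            exact ⟨fun h => h.1, fun h => ⟨h, by left; exact hi⟩⟩
          have hiN : i < NN Xv Yv := by rw [NN]; omega
          have hiA : i ∉ ([2 * Xv.length + Yv.length] : List ℕ) := by
            rw [mem_single_iff]; omega
          rw [hg'def, hsdef, hg' i, hg i, if_pos hiN, if_pos hiN, if_neg hiA, if_neg hiA]
          by_cases hiW : i ∈ W
          · rw [if_pos (hmem.2 hiW), if_pos hiW]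
          · rw [if_neg (fun h => hiW (hmem.1 h)), if_neg hiW]
        have hg'A : g' (2 * Xv.length + Yv.length) = 0 := by
          rw [hg'def, hg' _, if_pos hAA, if_pos (mem_single_iff.2 rfl), xOf_single, getD_single]
        have hg'Y : ∀ j < Yv.length,
            g' (2 * Xv.length + j) = (if ν (Yv.getD j 0) then 1 else 0) := by
          intro j hj
          have hsY := hY1 j hj
          rw [hsdef, hg _, if_pos (by rw [NN]; omega),
            if_neg (by rw [mem_single_iff]; omega)] at hsY
          have hmemW : (2 * Xv.length + j) ∈ W := by
            by_contra hc
            rw [if_neg hc] at hsY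
            exact one_ne_zero hsY.symm
          rw [if_pos hmemW] at hsY
          have hmem' : (2 * Xv.length + j) ∈ W' ↔ ν (Yv.getD j 0) = true := by
            rw [hW'def, Finset.mem_filter]
            constructor
            · rintro ⟨-, h | h⟩
              · omega
              · rwa [Nat.add_sub_cancel_left] at h
            · intro h
              exact ⟨hmemW, Or.inr (by rwa [Nat.add_sub_cancel_left])⟩
          rw [hg'def, hg' _, if_pos (by rw [NN]; omega),
            if_neg (by rw [mem_single_iff]; omega)]
          by_cases hν : ν (Yv.getD j 0) = true
          · rw [if_pos (hmem'.2 hν), hsY, if_pos hν]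
          · rw [if_neg (fun h => hν (hmem'.1 h)), if_neg hν]
        rcases hkey with hP | ⟨-, hR⟩
        · exact absurd (fun j hj => by
            have := hneq j hj
            rw [satF_neqC] at this ⊢
            rw [hXlt j (by omega), hXlt (Xv.length + j) (by omega)]
            exact this) hP
        · rcases hR with hR | hφ
          · rw [hg'A] at hR; exact absurd hR.symm one_ne_zero
          · rw [satF_trX1] at hφ
            refine Eq.trans (eval_congr ?_) hφ
            intro v hv
            by_cases hvX : v ∈ Xv
            · have hidx : List.idxOf v Xv < Xv.length := List.idxOf_lt_length_iff.2 hvX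
              simp only [posOf, hvX, if_true]
              rw [hXlt (Xv.length + List.idxOf v Xv) (by omega)]
            · have hvY : v ∈ Yv := (hvars v hv).resolve_left hvX
              have hidx : List.idxOf v Yv < Yv.length := List.idxOf_lt_length_iff.2 hvY
              have hYvv : Yv.getD (List.idxOf v Yv) 0 = v := getD_indexOf hvY
              simp only [posOf, hvX, if_false]
              rw [hg'Y (List.idxOf v Yv) hidx, hYvv]
              cases hν : ν v <;> simp [hν]
      · -- hA1 but not all Y = 1 : contradict h6
        exfalso
        apply h6
        right
        constructor
        · rintro ⟨-, hy⟩; exact hY1 hy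
        · left; exact hA1
    · -- s A ≠ 1 : contradiction via W' = W
      exfalso
      have hA0 : x'.getD 0 0 = 0 := by
        rw [hsA] at hA1; omega
      have hgood' : goodI (intv (redModel Xv Yv) [0]
          [2 * Xv.length + Yv.length] [0] W w ∅) := by
        apply goodI_intv
        · intro i hi; rw [mem_single_iff] at hi; subst hi
          rw [xOf_single, getD_single]; omega
        · exact hw2
      have hkey := h7 W Finset.Subset.rfl ∅ (Finset.empty_subset _)
      rw [holds_iff Xv Yv hgood', redForm_iff] at hkey
      have he : gI Xv Yv (intv (redModel Xv Yv) [0] [2 * Xv.length + Yv.length] [0] W w ∅)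
          = s := by
        funext i
        rw [hsdef, gI_intv, gI_intv]
        by_cases hiN : i < NN Xv Yv
        · rw [if_pos hiN, if_pos hiN]
          by_cases hiA : i ∈ ([2 * Xv.length + Yv.length] : List ℕ)
          · rw [if_pos hiA, if_pos hiA]
            rw [mem_single_iff] at hiA
            subst hiA
            rw [xOf_single, xOf_single, getD_single, hA0]
          · rw [if_neg hiA, if_neg hiA]
        · rw [if_neg hiN, if_neg hiN]
      rw [he] at hkey
      exact h6 hkey
end

section
/- In the sophisticated rock-throwing model M′ with binary endogenous variables ST, BT, SH, BH, BS, exogenous variable U, equations ST = U, BT = U, SH = ST, BH = BT ∧ ¬SH, BS = SH ∨ BH, and context u in which U makes both ST = 1 and BT = 1: ST = 1 is a cause of BS = 1 in (M′, u), but BT = 1 is not a cause of BS = 1 in (M′, u), under the updated HP definition. -/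
/-- The sophisticated rock-throwing model: a single binary exogenous variable
`U` and binary endogenous variables `ST` (0), `BT` (1), `SH` (2), `BH` (3),
`BS` (4), with equations `ST = U`, `BT = U`, `SH = ST`, `BH = BT ∧ ¬SH`,
`BS = SH ∨ BH`.  (In a total assignment, position 0 is `U` and positions
1,…,5 are `ST`, `BT`, `SH`, `BH`, `BS`.) -/
def rockSoph : CM :=
  ⟨[2], [2, 2, 2, 2, 2],
    [mkTable 6 (fun a => a.getD 0 0),
     mkTable 6 (fun a => a.getD 0 0),
     mkTable 6 (fun a => a.getD 1 0),
     mkTable 6 (fun a => min (a.getD 2 0) (1 - a.getD 3 0)),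
     mkTable 6 (fun a => max (a.getD 3 0) (a.getD 4 0))]⟩

lemma le_foldr_max {x : ℕ} {l : List ℕ} (h : x ∈ l) : x ≤ l.foldr max 0 := by
  induction l with
  | nil => simp at h
  | cons y t ih =>
    rcases List.mem_cons.mp h with rfl | h
    · exact le_max_left _ _
    · exact le_trans (ih h) (le_max_right _ _)

lemma mem_binLists {l : List ℕ} (h : ∀ x ∈ l, x ≤ 1) : l ∈ binLists l.length := by
  induction l with
  | nil => simp [binLists]
  | cons y t ih =>
    have ht : t ∈ binLists t.length := ih fun x hx => h x (List.mem_cons_of_mem _ hx)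
    have hy : y = 0 ∨ y = 1 := by have := h y (List.mem_cons_self); omega
    show y :: t ∈ binLists (t.length + 1)
    simp only [binLists, List.mem_flatMap]
    exact ⟨t, ht, by rcases hy with rfl | rfl <;> simp⟩

lemma evalTable_mkTable {n : ℕ} (f : List ℕ → ℕ) {a : List ℕ} (ha : a ∈ binLists n) :
    evalTable (mkTable n f) a = f a := by
  unfold evalTable mkTable
  set dom := binLists n with hdom
  set m := ((dom.map fun a => Encodable.encode a + 1).foldr max 0) + 1 with hm
  have hk : Encodable.encode a + 1 < m := by
    have h1 : Encodable.encode a + 1 ∈ dom.map fun a => Encodable.encode a + 1 :=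
      List.mem_map_of_mem ha
    have := le_foldr_max h1
    omega
  rw [List.getD_eq_getElem?_getD, List.getElem?_map, List.getElem?_range hk]
  simp only [Option.map_some, Option.getD_some]
  cases hfind : dom.find? (fun a' => Encodable.encode a' + 1 == Encodable.encode a + 1) with
  | none =>
    exfalso
    have := List.find?_eq_none.mp hfind a ha
    simp at this
  | some b =>
    have hb := List.find?_some hfind
    have hba : b = a := Encodable.encode_injective (by simpa using hb)
    subst hba
    simp
set_option maxRecDepth 10000

lemma range5 : List.range 5 = [0,1,2,3,4] := by decide

lemma sel0 (x0 x1 x2 x3 x4 : List ℕ) : [x0,x1,x2,x3,x4].getD 0 [] = x0 := rfl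
lemma sel1 (x0 x1 x2 x3 x4 : List ℕ) : [x0,x1,x2,x3,x4].getD 1 [] = x1 := rfl
lemma sel2 (x0 x1 x2 x3 x4 : List ℕ) : [x0,x1,x2,x3,x4].getD 2 [] = x2 := rfl
lemma sel3 (x0 x1 x2 x3 x4 : List ℕ) : [x0,x1,x2,x3,x4].getD 3 [] = x3 := rfl
lemma sel4 (x0 x1 x2 x3 x4 : List ℕ) : [x0,x1,x2,x3,x4].getD 4 [] = x4 := rfl

lemma step_eq (I : ℕ → Option ℕ) (v : List ℕ) (hv : v.length = 5) (hb : ∀ x ∈ v, x ≤ 1) :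
    rockSoph.step I [1] v =
      [(I 0).getD 1, (I 1).getD 1, (I 2).getD (v.getD 0 0),
       (I 3).getD (min (v.getD 1 0) (1 - v.getD 2 0)),
       (I 4).getD (max (v.getD 2 0) (v.getD 3 0))] := by
  have hmem : (1 :: v) ∈ binLists 6 := by
    have := mem_binLists (l := 1 :: v) (by
      intro x hx
      rcases List.mem_cons.mp hx with rfl | hx
      · exact le_refl 1
      · exact hb x hx)
    simpa [hv] using this
  have hnV : rockSoph.nV = 5 := rfl
  show (List.range rockSoph.nV).map _ = _
  rw [hnV, range5]
  simp only [List.map_cons, List.map_nil]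
  have tbl : rockSoph.tables =
      [mkTable 6 (fun a => a.getD 0 0),
       mkTable 6 (fun a => a.getD 0 0),
       mkTable 6 (fun a => a.getD 1 0),
       mkTable 6 (fun a => min (a.getD 2 0) (1 - a.getD 3 0)),
       mkTable 6 (fun a => max (a.getD 3 0) (a.getD 4 0))] := rfl
  have hu : ([1] : List ℕ) ++ v = 1 :: v := rfl
  rw [hu, tbl, sel0, sel1, sel2, sel3, sel4, evalTable_mkTable _ hmem,
    evalTable_mkTable _ hmem, evalTable_mkTable _ hmem, evalTable_mkTable _ hmem]
  have g0 : (1::v).getD 0 0 = 1 := rfl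
  have g1 : (1::v).getD 1 0 = v.getD 0 0 := rfl
  have g2 : (1::v).getD 2 0 = v.getD 1 0 := rfl
  have g3 : (1::v).getD 3 0 = v.getD 2 0 := rfl
  have g4 : (1::v).getD 4 0 = v.getD 3 0 := rfl
  rw [g0, g1, g2, g3, g4]
lemma bin5 {a0 a1 a2 a3 a4 : ℕ} (h0 : a0 ≤ 1) (h1 : a1 ≤ 1) (h2 : a2 ≤ 1)
    (h3 : a3 ≤ 1) (h4 : a4 ≤ 1) : ∀ x ∈ ([a0,a1,a2,a3,a4] : List ℕ), x ≤ 1 := by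
  intro x hx
  simp only [List.mem_cons, List.not_mem_nil, or_false] at hx
  rcases hx with rfl | rfl | rfl | rfl | rfl <;> assumption

lemma solve_eq (I : ℕ → Option ℕ) (hI : ∀ i c, I i = some c → c ≤ 1)
    (s b h g o : ℕ) (hs : s = (I 0).getD 1) (hbb : b = (I 1).getD 1)
    (hh : h = (I 2).getD s) (hg : g = (I 3).getD (min b (1 - h)))
    (ho : o = (I 4).getD (max h g)) :
    rockSoph.solve I [1] = [s, b, h, g, o] := by
  have key : ∀ d, d ≤ 1 → ∀ i, (I i).getD d ≤ 1 := by
    intro d hd i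
    cases hIi : I i with
    | none => simpa using hd
    | some c => simpa using hI i c hIi
  have hs1 : s ≤ 1 := hs ▸ key 1 le_rfl 0
  have hb1 : b ≤ 1 := hbb ▸ key 1 le_rfl 1
  have hh1 : h ≤ 1 := hh ▸ key s hs1 2
  have hg1 : g ≤ 1 := hg ▸ key _ (by omega) 3
  have ho1 : o ≤ 1 := ho ▸ key _ (by omega) 4
  have hj2 : (I 2).getD 0 ≤ 1 := key 0 (by omega) 2
  have hj3 : (I 3).getD 0 ≤ 1 := key 0 (by omega) 3
  have hj4 : (I 4).getD 0 ≤ 1 := key 0 (by omega) 4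
  have hj3' : (I 3).getD (min b (1 - (I 2).getD 0)) ≤ 1 := key _ (by omega) 3
  have hj4' : (I 4).getD (max ((I 2).getD 0) ((I 3).getD 0)) ≤ 1 := key _ (by omega) 4
  have hj4'' : (I 4).getD (max h ((I 3).getD (min b (1 - (I 2).getD 0)))) ≤ 1 :=
    key _ (by omega) 4
  have hit : rockSoph.solve I [1] =
      rockSoph.step I [1] (rockSoph.step I [1] (rockSoph.step I [1] (rockSoph.step I [1]
        (rockSoph.step I [1] (rockSoph.step I [1] [0,0,0,0,0]))))) := rfl
  have e1 : rockSoph.step I [1] [0,0,0,0,0] =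
      [s, b, (I 2).getD 0, (I 3).getD 0, (I 4).getD 0] := by
    rw [step_eq I [0,0,0,0,0] rfl (bin5 (Nat.zero_le 1) (Nat.zero_le 1) (Nat.zero_le 1) (Nat.zero_le 1) (Nat.zero_le 1)), hs, hbb]
    rfl
  have e2 : rockSoph.step I [1] [s, b, (I 2).getD 0, (I 3).getD 0, (I 4).getD 0] =
      [s, b, h, (I 3).getD (min b (1 - (I 2).getD 0)),
        (I 4).getD (max ((I 2).getD 0) ((I 3).getD 0))] := by
    rw [step_eq I [s, b, (I 2).getD 0, (I 3).getD 0, (I 4).getD 0] rfl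
      (bin5 hs1 hb1 hj2 hj3 hj4), hh, hs, hbb]
    rfl
  have e3 : rockSoph.step I [1] [s, b, h, (I 3).getD (min b (1 - (I 2).getD 0)),
        (I 4).getD (max ((I 2).getD 0) ((I 3).getD 0))] =
      [s, b, h, g, (I 4).getD (max h ((I 3).getD (min b (1 - (I 2).getD 0))))] := by
    rw [step_eq I [s, b, h, (I 3).getD (min b (1 - (I 2).getD 0)),
        (I 4).getD (max ((I 2).getD 0) ((I 3).getD 0))] rfl
      (bin5 hs1 hb1 hh1 hj3' hj4'), hg, hh, hs, hbb]
    rfl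
  have e4 : rockSoph.step I [1]
        [s, b, h, g, (I 4).getD (max h ((I 3).getD (min b (1 - (I 2).getD 0))))] =
      [s, b, h, g, o] := by
    rw [step_eq I [s, b, h, g, (I 4).getD (max h ((I 3).getD (min b (1 - (I 2).getD 0))))]
      rfl (bin5 hs1 hb1 hh1 hg1 hj4''), ho, hg, hh, hs, hbb]
    rfl
  have eL : rockSoph.step I [1] [s, b, h, g, o] = [s, b, h, g, o] := by
    rw [step_eq I [s, b, h, g, o] rfl (bin5 hs1 hb1 hh1 hg1 ho1), ho, hg, hh, hs, hbb]
    rfl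
  rw [hit, e1, e2, e3, e4, eL, eL]
lemma getD4 (a0 a1 a2 a3 a4 : ℕ) : ([a0,a1,a2,a3,a4] : List ℕ).getD 4 0 = a4 := rfl

lemma sat41 (a0 a1 a2 a3 a4 : ℕ) :
    CForm.sat [a0,a1,a2,a3,a4] (CForm.eq 4 1) ↔ a4 = 1 := by
  show ([a0,a1,a2,a3,a4] : List ℕ).getD 4 0 = 1 ↔ a4 = 1
  rw [getD4]

lemma getD_le_one {l : List ℕ} (hl : ∀ x ∈ l, x ≤ 1) : ∀ k, l.getD k 0 ≤ 1 := by
  intro k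
  induction l generalizing k with
  | nil => simp [List.getD]
  | cons a t ih =>
    cases k with
    | zero => simpa using hl a (by simp)
    | succ k => simpa [List.getD_cons_succ] using ih (fun x hx => hl x (by simp [hx])) k

lemma val_actual : rockSoph.solve (fun _ => none) [1] = [1,1,1,0,1] :=
  solve_eq (fun _ => none) (by intro i c hc; cases hc) 1 1 1 0 1 rfl rfl rfl rfl rfl

lemma val_eq (i : ℕ) : rockSoph.val [1] i = ([1,1,1,0,1] : List ℕ).getD i 0 := by
  show (rockSoph.solve _ [1]).getD i 0 = _
  rw [val_actual]

lemma val2 : rockSoph.val [1] 2 = 1 := by rw [val_eq]; rfl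
lemma val3 : rockSoph.val [1] 3 = 0 := by rw [val_eq]; rfl
lemma val4 : rockSoph.val [1] 4 = 1 := by rw [val_eq]; rfl

lemma val_le (i : ℕ) : rockSoph.val [1] i ≤ 1 := by
  rw [val_eq]
  exact getD_le_one (by intro x hx; simp at hx; omega) i

lemma holds_of (I : ℕ → Option ℕ) (hI : ∀ i c, I i = some c → c ≤ 1)
    (h0 : I 0 = some 1) (h2 : I 2 = none ∨ I 2 = some 1)
    (h3 : I 3 = none ∨ I 3 = some 0) (h4 : I 4 = none ∨ I 4 = some 1) :
    rockSoph.holds [1] I (CForm.eq 4 1) := by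
  have hsolve := solve_eq I hI 1 ((I 1).getD 1) 1 0 1
    (by rw [h0]; rfl) rfl
    (by rcases h2 with h | h <;> rw [h] <;> rfl)
    (by rcases h3 with h | h <;> rw [h] <;> simp)
    (by rcases h4 with h | h <;> rw [h] <;> rfl)
  show CForm.sat _ _
  rw [hsolve, sat41]
lemma suzy_AC2 : AC2 rockSoph [1] (CForm.eq 4 1) [0] [1] := by
  refine ⟨{1}, [0], fun _ => 0, ?_, ?_, rfl, ?_, ?_, ?_, ?_⟩
  · decide
  · decide
  · intro k hk
    have hk0 : k = 0 := by simpa using hk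
    subst hk0
    decide
  · intro i hi
    have : i = 1 := by simpa using hi
    subst this
    decide
  · -- (a): setting ST ← 0, BT ← 0 makes BS = 0
    set I := intv rockSoph [1] [0] [0] {1} (fun _ => 0) ∅ with hIdef
    have e0 : I 0 = some 0 := by rw [hIdef]; simp [intv, xOf]
    have e1 : I 1 = some 0 := by rw [hIdef]; simp [intv, xOf]
    have e2 : I 2 = none := by rw [hIdef]; simp [intv, xOf]
    have e3 : I 3 = none := by rw [hIdef]; simp [intv, xOf]
    have e4 : I 4 = none := by rw [hIdef]; simp [intv, xOf]
    have hIle : ∀ i c, I i = some c → c ≤ 1 := by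
      intro i c hc
      rw [hIdef] at hc
      unfold intv at hc
      split_ifs at hc with hx hw hz
      · cases hc
        exact getD_le_one (l := [0]) (by simp) _
      · cases hc; exact Nat.zero_le 1
      · cases hc; exact val_le i
    have hsol := solve_eq I hIle 0 0 0 0 0
      (by rw [e0]; rfl) (by rw [e1]; rfl) (by rw [e2]; rfl) (by rw [e3]; rfl) (by rw [e4]; rfl)
    intro hcon
    rw [CM.holds, hsol, sat41] at hcon
    omega
  · -- (b)
    intro W' hW' Z' hZ'
    set I := intv rockSoph [1] [0] [1] W' (fun _ => 0) Z' with hIdef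
    have hW1 : ∀ i, i ∈ W' → i = 1 := by
      intro i hi
      have := hW' hi
      simpa using this
    have hZsub : ∀ i, i ∈ Z' → i = 2 ∨ i = 3 ∨ i = 4 := by
      intro i hi
      have := hZ' hi
      simp only [CM.endo, Finset.mem_sdiff, Finset.mem_range, List.toFinset_cons,
        List.toFinset_nil, insert_empty_eq, Finset.mem_singleton] at this
      obtain ⟨⟨h5, hn1⟩, hn0⟩ := this
      have h5' : i < 5 := h5
      omega
    apply holds_of I
    · intro i c hc
      rw [hIdef] at hc
      unfold intv at hc
      split_ifs at hc with hx hw hz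
      · cases hc
        exact getD_le_one (l := [1]) (by simp) _
      · cases hc; exact Nat.zero_le 1
      · cases hc; exact val_le i
    · rw [hIdef]; simp [intv, xOf]
    · have h2W : 2 ∉ W' := fun h => by have := hW1 2 h; omega
      by_cases h2 : 2 ∈ Z'
      · right; rw [hIdef]; simp [intv, h2W, h2, val2]
      · left; rw [hIdef]; simp [intv, h2W, h2]
    · have h3W : 3 ∉ W' := fun h => by have := hW1 3 h; omega
      by_cases h3 : 3 ∈ Z'
      · right; rw [hIdef]; simp [intv, h3W, h3, val3]
      · left; rw [hIdef]; simp [intv, h3W, h3]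
    · have h4W : 4 ∉ W' := fun h => by have := hW1 4 h; omega
      by_cases h4 : 4 ∈ Z'
      · right; rw [hIdef]; simp [intv, h4W, h4, val4]
      · left; rw [hIdef]; simp [intv, h4W, h4]
lemma suzy_AC1 : AC1 rockSoph [1] (CForm.eq 4 1) [0] [1] := by
  constructor
  · intro k hk
    have hk0 : k = 0 := by simpa using hk
    subst hk0
    show rockSoph.val [1] (([0] : List ℕ).getD 0 0) = ([1] : List ℕ).getD 0 0
    rw [val_eq]; rfl
  · show CForm.sat (rockSoph.solve (fun _ => none) [1]) _
    rw [val_actual, sat41]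

lemma not_AC2_nil : ¬ AC2 rockSoph [1] (CForm.eq 4 1) [] [] := by
  rintro ⟨W, x', w, hW, hdisj, hxlen, hxr, hwr, ha, hb⟩
  apply ha
  have h := hb W (Finset.Subset.refl W) ∅ (Finset.empty_subset _)
  have heq : intv rockSoph [1] [] ([] : List ℕ) W w ∅ =
      intv rockSoph [1] [] x' W w ∅ := by
    funext i
    simp [intv]
  rwa [heq] at h

lemma suzy_AC3 : AC3 rockSoph [1] (CForm.eq 4 1) [0] [1] := by
  intro Ys ys hlen hsub hne
  rcases List.sublist_singleton.mp hsub with hz | hz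
  · have hY : Ys = [] := by
      cases Ys with
      | nil => rfl
      | cons a t =>
        cases ys with
        | nil => simp at hlen
        | cons b u => simp at hz
    have hy : ys = [] := by
      cases ys with
      | nil => rfl
      | cons b u =>
        cases Ys with
        | nil => simp at hlen
        | cons a t => simp at hz
    subst hY; subst hy
    exact not_AC2_nil
  · exact absurd hz hne
lemma billy_not_AC2 : ¬ AC2 rockSoph [1] (CForm.eq 4 1) [1] [1] := by
  rintro ⟨W, x', w, hWendo, hdisj, hxlen, hxr, hwr, ha, hb⟩
  have h1W : (1 : ℕ) ∉ W := hdisj 1 (by simp)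
  have hW5 : ∀ i ∈ W, i < 5 := by
    intro i hi
    exact Finset.mem_range.mp (hWendo hi)
  have hrV : ∀ i, i < 5 → rockSoph.rV.getD i 0 = 2 := by
    intro i hi; interval_cases i <;> rfl
  have hwle : ∀ i ∈ W, w i ≤ 1 := by
    intro i hi
    have := hwr i hi
    rw [hrV i (hW5 i hi)] at this
    omega
  have hxv1 : x'.getD 0 0 ≤ 1 := by
    have h := hxr 0 (by simp)
    have h2 : rockSoph.rV.getD (([1] : List ℕ).getD 0 0) 0 = 2 := rfl
    rw [h2] at h
    omega
  have hx1 : x'.length = 1 := by simpa using hxlen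
  have hx'le : ∀ k, x'.getD k 0 ≤ 1 := by
    intro k
    cases k with
    | zero => exact hxv1
    | succ k => rw [List.getD_eq_default _ _ (by omega)]; omega
  set xv := x'.getD 0 0 with hxvdef
  set Ia := intv rockSoph [1] [1] x' W w ∅ with hIa
  set Ib := intv rockSoph [1] [1] [1] W w ({3} \ W) with hIb
  have hZsub : ({3} \ W : Finset ℕ) ⊆ (rockSoph.endo \ W) \ ([1] : List ℕ).toFinset := by
    intro i hi
    simp only [Finset.mem_sdiff, Finset.mem_singleton] at hi
    obtain ⟨rfl, h3W⟩ := hi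
    simp only [Finset.mem_sdiff, List.toFinset_cons, List.toFinset_nil,
      insert_empty_eq, Finset.mem_singleton]
    exact ⟨⟨by decide, h3W⟩, by omega⟩
  have hbW := hb W (Finset.Subset.refl W) ({3} \ W) hZsub
  have hIa1 : Ia 1 = some xv := by rw [hIa, hxvdef]; simp [intv, xOf]
  have hIb1 : Ib 1 = some 1 := by rw [hIb]; simp [intv, xOf]
  have heq : ∀ i, i ≠ 1 → i ≠ 3 → Ia i = Ib i := by
    intro i h1 h3
    rw [hIa, hIb]
    by_cases hiW : i ∈ W
    · simp [intv, h1, hiW]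
    · simp [intv, h1, h3, hiW, Finset.mem_sdiff]
  have hIa3 : Ia 3 = if 3 ∈ W then some (w 3) else none := by
    rw [hIa]; by_cases h3W : 3 ∈ W <;> simp [intv, h3W]
  have hIb3 : Ib 3 = if 3 ∈ W then some (w 3) else some 0 := by
    rw [hIb]; by_cases h3W : 3 ∈ W <;> simp [intv, h3W, val3]
  have hIale : ∀ i c, Ia i = some c → c ≤ 1 := by
    intro i c hc
    rw [hIa] at hc
    unfold intv at hc
    split_ifs at hc with h1 h2 h3
    · cases hc; exact hx'le _
    · cases hc; exact hwle i h2
    · cases hc; exact val_le i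
  have hIble : ∀ i c, Ib i = some c → c ≤ 1 := by
    intro i c hc
    rw [hIb] at hc
    unfold intv at hc
    split_ifs at hc with h1 h2 h3
    · cases hc; exact getD_le_one (l := [1]) (by simp) _
    · cases hc; exact hwle i h2
    · cases hc; exact val_le i
  have keyA : ∀ d, d ≤ 1 → ∀ i, (Ia i).getD d ≤ 1 := by
    intro d hd i
    cases hIi : Ia i with
    | none => simpa using hd
    | some c => simpa using hIale i c hIi
  have keyB : ∀ d, d ≤ 1 → ∀ i, (Ib i).getD d ≤ 1 := by
    intro d hd i
    cases hIi : Ib i with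
    | none => simpa using hd
    | some c => simpa using hIble i c hIi
  set s := (Ia 0).getD 1 with hs
  set hv := (Ia 2).getD s with hhv
  set ga := (Ia 3).getD (min xv (1 - hv)) with hga
  set oa := (Ia 4).getD (max hv ga) with hoa
  set gb := (Ib 3).getD (min 1 (1 - hv)) with hgb
  set ob := (Ib 4).getD (max hv gb) with hob
  have h0eq : Ia 0 = Ib 0 := heq 0 (by omega) (by omega)
  have h2eq : Ia 2 = Ib 2 := heq 2 (by omega) (by omega)
  have h4eq : Ia 4 = Ib 4 := heq 4 (by omega) (by omega)
  have ea := solve_eq Ia hIale s xv hv ga oa hs (by rw [hIa1]; rfl) hhv hga hoa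
  have eb := solve_eq Ib hIble s 1 hv gb ob (by rw [hs, h0eq]) (by rw [hIb1]; rfl)
    (by rw [hhv, h2eq]) hgb hob
  rw [CM.holds, ea, sat41] at ha
  rw [CM.holds, eb, sat41] at hbW
  have hs1 : s ≤ 1 := keyA 1 le_rfl 0
  have hh1 : hv ≤ 1 := keyA s hs1 2
  have hga1 : ga ≤ 1 := keyA _ (by omega) 3
  have hgb1 : gb ≤ 1 := keyB _ (by omega) 3
  by_cases hW4 : 4 ∈ W
  · have ha4 : Ia 4 = some (w 4) := by rw [hIa]; simp [intv, hW4]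
    apply ha
    rw [hoa, ha4, ← hbW, hob, ← h4eq, ha4]
    rfl
  · have ha4 : Ia 4 = none := by rw [hIa]; simp [intv, hW4]
    have hoa' : oa = max hv ga := by rw [hoa, ha4]; rfl
    have hob' : ob = max hv gb := by rw [hob, ← h4eq, ha4]; rfl
    rw [hoa'] at ha
    rw [hob'] at hbW
    have l1 : hv ≤ max hv ga := le_max_left _ _
    have l2 : ga ≤ max hv ga := le_max_right _ _
    have l3 : max hv ga ≤ 1 := max_le hh1 hga1
    have hvz : hv = 0 ∧ ga = 0 := by
      rcases max_choice hv ga with hm | hm <;> omega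
    obtain ⟨hv0, hga0⟩ := hvz
    have l4 : gb ≤ max hv gb := le_max_right _ _
    have l5 : hv ≤ max hv gb := le_max_left _ _
    have hgbe : gb = 1 := by
      rcases max_choice hv gb with hm | hm <;> omega
    by_cases hW3 : 3 ∈ W
    · have e3a : ga = w 3 := by rw [hga, hIa3, if_pos hW3]; rfl
      have e3b : gb = w 3 := by rw [hgb, hIb3, if_pos hW3]; rfl
      omega
    · have e3b : gb = 0 := by rw [hgb, hIb3, if_neg hW3]; rfl
      omega
/-- In the sophisticated rock-throwing model, in the context `u = 1` (in which
both Suzy and Billy throw), `ST = 1` is a cause of `BS = 1`, but `BT = 1` is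
not a cause of `BS = 1`, under the updated HP definition. -/
theorem rockSoph_suzy_not_billy :
    IsCause rockSoph [1] (CForm.eq 4 1) [0] [1] ∧
    ¬ IsCause rockSoph [1] (CForm.eq 4 1) [1] [1] := by
  constructor
  · exact ⟨suzy_AC1, suzy_AC2, suzy_AC3⟩
  · rintro ⟨-, h2, -⟩
    exact billy_not_AC2 h2
end
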